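/- Let K be algebraically closed, ε a primitive l-th root of unity, and B_ε the twisted Laurent polynomial algebra over K generated by y_1^{±1},…,y_{2r}^{±1}, z_1^{±1},…,z_t^{±1} with y_{2i-1}y_{2i} = ε^{d_i} y_{2i}y_{2i-1}, GCD(d_i,l)=1, all other pairs commuting. Then every irreducible finite-dimensional representation of B_ε has dimension exactly l^r, and is uniquely determined by its central character. -/

import Mathlib

section Aux
variable {K : Type*} [Field K]

lemma ofFn_prod_apply_eigen {V : Type*} [AddCommGroup V] [Module K V] :
    ∀ (n : ℕ) (Q : Fin n → Module.End K V) (c : Fin n → K) (v : V),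
      (∀ i, Q i v = c i • v) →
      (List.ofFn Q).prod v = (∏ i, c i) • v := by
  intro n
  induction n with
  | zero => intro Q c v h; simp
  | succ n ih =>
    intro Q c v h
    rw [List.ofFn_succ, List.prod_cons, Fin.prod_univ_succ, Module.End.mul_apply,
      ih (fun i => Q i.succ) (fun i => c i.succ) v (fun i => h i.succ),
      map_smul, h 0, smul_smul]
    rw [mul_comm]

lemma ofFn_prod_mul {M : Type*} [Monoid M] :
    ∀ (n : ℕ) (f g : Fin n → M), (∀ i j, Commute (f i) (g j)) →
      (List.ofFn fun i => f i * g i).prod = (List.ofFn f).prod * (List.ofFn g).prod := by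
  intro n
  induction n with
  | zero => intro f g h; simp
  | succ n ih =>
    intro f g h
    rw [List.ofFn_succ, List.ofFn_succ, List.ofFn_succ, List.prod_cons, List.prod_cons,
      List.prod_cons]
    have hc : Commute (g 0) (List.ofFn fun i : Fin n => f i.succ).prod := by
      apply Commute.list_prod_right
      intro x hx
      rw [List.mem_ofFn] at hx
      obtain ⟨i, rfl⟩ := hx
      exact (h i.succ 0).symm
    rw [ih (fun i => f i.succ) (fun i => g i.succ) (fun i j => h i.succ j.succ)]
    rw [mul_assoc, mul_assoc, ← mul_assoc (g 0), hc.eq, mul_assoc]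

lemma ofFn_prod_eq_single {M : Type*} [Monoid M] :
    ∀ (n : ℕ) (f : Fin n → M) (i : Fin n), (∀ j, j ≠ i → f j = 1) →
      (List.ofFn f).prod = f i := by
  intro n
  induction n with
  | zero => intro f i; exact i.elim0
  | succ n ih =>
    intro f i h
    rw [List.ofFn_succ, List.prod_cons]
    rcases Fin.eq_zero_or_eq_succ i with rfl | ⟨i', rfl⟩
    · have h1 : (List.ofFn fun j : Fin n => f j.succ).prod = 1 := by
        apply List.prod_eq_one
        intro x hx
        rw [List.mem_ofFn] at hx
        obtain ⟨j, rfl⟩ := hx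
        exact h j.succ (Fin.succ_ne_zero j)
      rw [h1, mul_one]
    · have h0 : f 0 = 1 := h 0 (Fin.succ_ne_zero i').symm
      rw [h0, one_mul]
      exact ih (fun j => f j.succ) i' (fun j hj => h j.succ (by
        simp only [ne_eq, Fin.succ_inj]; exact hj))

lemma smul_comm_ofFn_prod {A : Type*} [Ring A] [Algebra K A] :
    ∀ (n : ℕ) (u : A) (f : Fin n → A) (c : Fin n → K),
      (∀ i, u * f i = c i • (f i * u)) →
      u * (List.ofFn f).prod = (∏ i, c i) • ((List.ofFn f).prod * u) := by
  intro n
  induction n with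
  | zero => intro u f c h; simp
  | succ n ih =>
    intro u f c h
    rw [List.ofFn_succ, List.prod_cons, Fin.prod_univ_succ, ← mul_assoc, h 0,
      smul_mul_assoc, mul_assoc,
      ih u (fun i => f i.succ) (fun i => c i.succ) (fun i => h i.succ),
      mul_smul_comm, smul_smul, mul_assoc]

end Aux

universe u v

lemma exists_common_eigenvector {K : Type v} [Field K] [IsAlgClosed K] :
    ∀ (n : ℕ) (V : Type u) [AddCommGroup V] [Module K V] [FiniteDimensional K V]
      [Nontrivial V] (f : Fin n → Module.End K V), (∀ i j, Commute (f i) (f j)) →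
      ∃ (v : V) (μ : Fin n → K), v ≠ 0 ∧ ∀ i, f i v = μ i • v := by
  intro n
  induction n with
  | zero =>
    intro V _ _ _ _ f _
    obtain ⟨v, hv⟩ := exists_ne (0 : V)
    exact ⟨v, Fin.elim0, hv, fun i => i.elim0⟩
  | succ n ih =>
    intro V _ _ _ _ f hf
    obtain ⟨μ₀, hμ₀⟩ := Module.End.exists_eigenvalue (f 0)
    set W := (f 0).eigenspace μ₀ with hW
    haveI : Nontrivial W := Submodule.nontrivial_iff_ne_bot.mpr hμ₀
    have hWinv : ∀ i : Fin n, ∀ x ∈ W, f i.succ x ∈ W := by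
      intro i x hx
      rw [hW, Module.End.mem_eigenspace_iff] at hx ⊢
      rw [← Module.End.mul_apply, (hf 0 i.succ).eq, Module.End.mul_apply, hx, map_smul]
    set g : Fin n → Module.End K W := fun i => (f i.succ).restrict (hWinv i) with hg
    have hgcomm : ∀ i j, Commute (g i) (g j) :=
      fun i j => LinearMap.restrict_commute (hf i.succ j.succ) _ _
    obtain ⟨v, μ, hv, hvg⟩ := ih W g hgcomm
    refine ⟨(v : V), Fin.cons μ₀ μ, by simpa using hv, ?_⟩
    intro i
    rcases Fin.eq_zero_or_eq_succ i with rfl | ⟨i', rfl⟩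
    · have h2 : (f 0) ↑v = μ₀ • (v : V) := Module.End.mem_eigenspace_iff.mp v.2
      simpa using h2
    · have := congrArg (Subtype.val) (hvg i')
      simpa [hg, LinearMap.restrict_apply] using this

section Schur
variable {K : Type v} [Field K] [IsAlgClosed K] {B : Type*} [Ring B] [Algebra K B]
variable {V : Type u} [AddCommGroup V] [Module K V] [FiniteDimensional K V] [Nontrivial V]

lemma schur_scalar (ρ : B →ₐ[K] Module.End K V)
    (hirr : ∀ W : Submodule K V, (∀ x : B, ∀ v ∈ W, ρ x v ∈ W) → W = ⊥ ∨ W = ⊤)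
    (x₀ : B) (hx₀ : ∀ x : B, x₀ * x = x * x₀) :
    ∃ c : K, ρ x₀ = c • 1 := by
  obtain ⟨c, hc⟩ := Module.End.exists_eigenvalue (ρ x₀)
  refine ⟨c, ?_⟩
  have hinv : ∀ x : B, ∀ v ∈ (ρ x₀).eigenspace c, ρ x v ∈ (ρ x₀).eigenspace c := by
    intro x v hv
    rw [Module.End.mem_eigenspace_iff] at hv ⊢
    rw [← Module.End.mul_apply, ← map_mul, hx₀ x, map_mul, Module.End.mul_apply, hv, map_smul]
  rcases hirr _ hinv with h | h
  · exact absurd h hc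
  · ext v
    have hv : v ∈ (ρ x₀).eigenspace c := h ▸ Submodule.mem_top
    rw [Module.End.mem_eigenspace_iff] at hv
    simpa using hv

/-- The subalgebra of endomorphisms preserving a submodule. -/
def stabAlg (W : Submodule K V) : Subalgebra K (Module.End K V) where
  carrier := {T | ∀ v ∈ W, T v ∈ W}
  mul_mem' := fun {T S} hT hS v hv => hT _ (hS v hv)
  one_mem' := fun v hv => hv
  add_mem' := fun {T S} hT hS v hv => W.add_mem (hT v hv) (hS v hv)
  zero_mem' := fun v _ => W.zero_mem
  algebraMap_mem' := fun c v hv => by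
    simpa [Module.algebraMap_end_apply] using W.smul_mem c hv

end Schur

section PowSwap
variable {K : Type*} [Field K] {A : Type*} [Ring A] [Algebra K A]

lemma pow_swap {u x : A} {c : K} (h : u * x = c • (x * u)) :
    ∀ m : ℕ, u * x ^ m = c ^ m • (x ^ m * u) := by
  intro m
  induction m with
  | zero => simp
  | succ m ih =>
    rw [pow_succ, ← mul_assoc, ih, smul_mul_assoc, mul_assoc, h, mul_smul_comm, smul_smul, ← mul_assoc, ← pow_succ]

lemma pow_swap' {u x : A} {c : K} (h : u * x = c • (x * u)) :
    ∀ m : ℕ, u ^ m * x = c ^ m • (x * u ^ m) := by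
  intro m
  induction m with
  | zero => simp
  | succ m ih =>
    rw [pow_succ, mul_assoc, h, mul_smul_comm, ← mul_assoc, ih, smul_mul_assoc, smul_smul, mul_comm c (c ^ m), mul_assoc, ← pow_succ]

end PowSwap

section EpsInj
variable {K : Type*} [Field K]

lemma eps_pow_inj {eps : K} {l : ℕ} (hl : 0 < l) (hprim : IsPrimitiveRoot eps l)
    {D : ℕ} (hD : Nat.Coprime D l) : ∀ {x y : ℕ}, x < l → y < l →
    eps ^ (D * x) = eps ^ (D * y) → x = y := by
  have key : ∀ x y : ℕ, y ≤ x → x < l → eps ^ (D * x) = eps ^ (D * y) → x = y := by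
    intro x y hyx hx h
    have heq : eps ^ (D * y) * eps ^ (D * (x - y)) = eps ^ (D * y) * 1 := by
      rw [mul_one, ← pow_add, ← Nat.mul_add, Nat.add_sub_cancel' hyx, h]
    have hne : eps ^ (D * y) ≠ 0 := pow_ne_zero _ (hprim.ne_zero hl.ne')
    have h1 : eps ^ (D * (x - y)) = 1 := mul_left_cancel₀ hne heq
    have hdvd : l ∣ D * (x - y) := (hprim.pow_eq_one_iff_dvd _).mp h1
    have hdvd2 : l ∣ (x - y) := Nat.Coprime.dvd_of_dvd_mul_left (Nat.Coprime.symm hD) hdvd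
    have hz : x - y = 0 := by
      rcases Nat.eq_zero_or_pos (x - y) with h0 | hpos
      · exact h0
      · exact absurd (Nat.le_of_dvd hpos hdvd2) (by omega)
    omega
  intro x y hx hy h
  rcases le_total y x with hyx | hxy
  · exact key x y hyx hx h
  · exact (key y x hxy hy h.symm).symm

end EpsInj
section StdBasis

variable {K : Type*} [Field K] {B : Type*} [Ring B] [Algebra K B]
variable {V : Type*} [AddCommGroup V] [Module K V] [FiniteDimensional K V] [Nontrivial V]

lemma std_basis
    (l : ℕ) (hl : 0 < l) (eps : K) (hprim : IsPrimitiveRoot eps l)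
    (r t : ℕ) (a b : Fin r → Bˣ) (z : Fin t → Bˣ)
    (d : Fin r → ℕ) (hd : ∀ i, Nat.Coprime (d i) l)
    (hrel : ∀ i, (a i : B) * (b i : B) = eps ^ (d i) • ((b i : B) * (a i : B)))
    (hab : ∀ i j, i ≠ j → Commute (a i : B) (b j : B))
    (hbb : ∀ i j, Commute (b i : B) (b j : B))
    (hgen : Algebra.adjoin K
      (Set.range (fun i => ((a i : Bˣ) : B)) ∪ Set.range (fun i => (((a i)⁻¹ : Bˣ) : B)) ∪
       Set.range (fun i => ((b i : Bˣ) : B)) ∪ Set.range (fun i => (((b i)⁻¹ : Bˣ) : B)) ∪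
       Set.range (fun j => ((z j : Bˣ) : B)) ∪ Set.range (fun j => (((z j)⁻¹ : Bˣ) : B)))
      = ⊤)
    (ρ : B →ₐ[K] Module.End K V)
    (hirr : ∀ W : Submodule K V, (∀ x : B, ∀ v ∈ W, ρ x v ∈ W) → W = ⊥ ∨ W = ⊤)
    (ν β : Fin r → K) (α : Fin t → K)
    (v₀ : V) (hv₀ : v₀ ≠ 0)
    (heig : ∀ i, ρ ((a i : Bˣ) : B) v₀ = ν i • v₀)
    (hβ : ∀ i, ρ (((b i : Bˣ) : B) ^ l) = β i • 1)
    (hα : ∀ j, ρ ((z j : Bˣ) : B) = α j • 1) :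
    ∃ bas : Module.Basis (Fin r → Fin l) K V,
      (∀ (k : Fin r → Fin l) (i : Fin r),
        ρ ((a i : Bˣ) : B) (bas k) = (eps ^ (d i * (k i : ℕ)) * ν i) • bas k) ∧
      (∀ (k : Fin r → Fin l) (i : Fin r),
        ρ ((b i : Bˣ) : B) (bas k) =
          if h : (k i : ℕ) + 1 < l then bas (Function.update k i ⟨(k i : ℕ) + 1, h⟩)
          else β i • bas (Function.update k i ⟨0, hl⟩)) ∧
      (∀ (k : Fin r → Fin l) (j : Fin t), ρ ((z j : Bˣ) : B) (bas k) = α j • bas k) := by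
  classical
  set A : Fin r → Module.End K V := fun i => ρ ((a i : Bˣ) : B) with hA
  set Bo : Fin r → Module.End K V := fun i => ρ ((b i : Bˣ) : B) with hBo
  set P : (Fin r → ℕ) → Module.End K V :=
    fun k => (List.ofFn fun i => Bo i ^ (k i)).prod with hP
  set w : (Fin r → ℕ) → V := fun k => P k v₀ with hw
  have hepsne : eps ≠ 0 := hprim.ne_zero hl.ne'
  have hrelE : ∀ i, A i * Bo i = eps ^ (d i) • (Bo i * A i) := by
    intro i
    rw [hA, hBo]
    dsimp only
    rw [← map_mul, hrel i, map_smul, map_mul]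
  have hBBcomm : ∀ i j, Commute (Bo i) (Bo j) := fun i j => Commute.map (hbb i j) ρ
  have hunit : ∀ u : Bˣ, ρ ((u⁻¹ : Bˣ) : B) * ρ (u : B) = 1 ∧
      ρ (u : B) * ρ ((u⁻¹ : Bˣ) : B) = 1 := by
    intro u
    constructor <;> rw [← map_mul] <;> simp
  have hPadd : ∀ k k', P (k + k') = P k * P k' := by
    intro k k'
    rw [hP]
    dsimp only
    simp only [Pi.add_apply, pow_add]
    exact ofFn_prod_mul r _ _ (fun i j => (hBBcomm i j).pow_pow _ _)
  have hPsingle : ∀ (i : Fin r) (m : ℕ), P (Pi.single i m) = Bo i ^ m := by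
    intro i m
    rw [hP]
    dsimp only
    rw [ofFn_prod_eq_single r _ i ?_]
    · rw [Pi.single_eq_same]
    · intro j hj
      rw [Pi.single_eq_of_ne hj, pow_zero]
  have hPzero : P 0 = 1 := by
    rw [hP]
    dsimp only
    apply List.prod_eq_one
    intro x hx
    rw [List.mem_ofFn] at hx
    obtain ⟨i, rfl⟩ := hx
    simp
  have hAP : ∀ (i : Fin r) (k : Fin r → ℕ), A i * P k = eps ^ (d i * k i) • (P k * A i) := by
    intro i k
    have key := smul_comm_ofFn_prod r (A i) (fun j => Bo j ^ (k j))
      (fun j => if j = i then eps ^ (d i * k i) else 1) ?_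
    · rw [hP]
      dsimp only
      rw [key, Finset.prod_ite_eq' Finset.univ i _, if_pos (Finset.mem_univ i)]
    · intro j
      by_cases hj : j = i
      · subst hj
        rw [if_pos rfl]
        have hps := pow_swap (hrelE j) (k j)
        rw [hps, ← pow_mul]
      · rw [if_neg hj, one_smul]
        exact (((Commute.map (hab i j (fun h => hj h.symm)) ρ)).pow_right _).eq
  have hAw : ∀ (i : Fin r) (k : Fin r → ℕ),
      A i (w k) = (eps ^ (d i * k i) * ν i) • w k := by
    intro i k
    rw [hw]
    dsimp only
    rw [← Module.End.mul_apply, hAP i k, LinearMap.smul_apply, Module.End.mul_apply,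
      heig i, map_smul, smul_smul]
  have hBoP : ∀ (i : Fin r) (k : Fin r → ℕ), Bo i * P k = P k * Bo i := by
    intro i k
    have hc : Commute (Bo i) (P k) := by
      rw [hP]
      dsimp only
      apply Commute.list_prod_right
      intro x hx
      rw [List.mem_ofFn] at hx
      obtain ⟨j, rfl⟩ := hx
      exact (hBBcomm i j).pow_right _
    exact hc.eq
  have hBw : ∀ (i : Fin r) (k : Fin r → ℕ), Bo i (w k) = w (k + Pi.single i 1) := by
    intro i k
    rw [hw]
    dsimp only
    rw [← Module.End.mul_apply, hBoP, hPadd, hPsingle, pow_one]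
  have hBl : ∀ i : Fin r, (Bo i) ^ l = β i • 1 := by
    intro i
    rw [hBo]
    dsimp only
    rw [← map_pow, hβ i]
  have hwl : ∀ (i : Fin r) (k : Fin r → ℕ), w (k + Pi.single i l) = β i • w k := by
    intro i k
    rw [hw]
    dsimp only
    rw [hPadd, hPsingle, hBl, mul_smul_comm, mul_one, LinearMap.smul_apply]
  have hone_ne : (1 : Module.End K V) ≠ 0 := by
    obtain ⟨v, hv⟩ := exists_ne (0 : V)
    intro h
    apply hv
    have := congrArg (fun T : Module.End K V => T v) h
    simpa using this
  have hνne : ∀ i, ν i ≠ 0 := by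
    intro i hzero
    apply hv₀
    have h2 := (hunit (a i)).1
    have h3 : (ρ (((a i)⁻¹ : Bˣ) : B) * A i) v₀ = v₀ := by rw [h2, Module.End.one_apply]
    rw [Module.End.mul_apply, heig i, hzero, zero_smul, map_zero] at h3
    exact h3.symm
  have hβne : ∀ i, β i ≠ 0 := by
    intro i hzero
    have h2 := (hunit (b i)).1
    have hcomm : Commute (ρ (((b i)⁻¹ : Bˣ) : B)) (Bo i) := by
      rw [hBo]
      dsimp only
      exact Commute.map ((Commute.refl ((b i : Bˣ) : B)).units_inv_left) ρ
    have hp : (ρ (((b i)⁻¹ : Bˣ) : B)) ^ l * (Bo i) ^ l = 1 := by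
      rw [← hcomm.mul_pow, h2, one_pow]
    rw [hBl, hzero, zero_smul, mul_zero] at hp
    exact hone_ne hp.symm
  have hαne : ∀ j, α j ≠ 0 := by
    intro j hzero
    have h2 := (hunit (z j)).1
    rw [hα j, hzero, zero_smul, mul_zero] at h2
    exact hone_ne h2.symm
  have hwne : ∀ k, w k ≠ 0 := by
    intro k hk
    apply hv₀
    set Q : Module.End K V := (List.ofFn fun i => (ρ (((b i)⁻¹ : Bˣ) : B)) ^ (k i)).prod with hQ
    have hQP : Q * P k = 1 := by
      rw [hQ, hP]
      dsimp only
      rw [← ofFn_prod_mul r _ _ ?_]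
      · apply List.prod_eq_one
        intro x hx
        rw [List.mem_ofFn] at hx
        obtain ⟨i, rfl⟩ := hx
        have hcomm : Commute (ρ (((b i)⁻¹ : Bˣ) : B)) (Bo i) := by
          rw [hBo]; dsimp only
          exact Commute.map ((Commute.refl ((b i : Bˣ) : B)).units_inv_left) ρ
        rw [← hcomm.mul_pow, (hunit (b i)).1, one_pow]
      · intro i j
        have : Commute (((b i)⁻¹ : Bˣ) : B) ((b j : Bˣ) : B) := (hbb i j).units_inv_left
        exact ((Commute.map this ρ).pow_pow _ _)
    have : (Q * P k) v₀ = v₀ := by rw [hQP, Module.End.one_apply]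
    rw [Module.End.mul_apply] at this
    rw [hw] at hk
    dsimp only at hk
    rw [hk, map_zero] at this
    exact this.symm
  -- the spanning set
  set emb : (Fin r → Fin l) → (Fin r → ℕ) := fun k i => (k i : ℕ) with hemb
  set W : Submodule K V :=
    Submodule.span K (Set.range fun k : Fin r → Fin l => w (emb k)) with hWdef
  have hmemW : ∀ k : Fin r → Fin l, w (emb k) ∈ W := fun k => Submodule.subset_span ⟨k, rfl⟩
  -- explicit action of the b's in terms of Fin l exponents
  have hBfor : ∀ (k : Fin r → Fin l) (i : Fin r),
      Bo i (w (emb k)) =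
        if h : (k i : ℕ) + 1 < l then w (emb (Function.update k i ⟨(k i : ℕ) + 1, h⟩))
        else β i • w (emb (Function.update k i ⟨0, hl⟩)) := by
    intro k i
    rw [hBw]
    by_cases h : (k i : ℕ) + 1 < l
    · rw [dif_pos h]
      congr 1
      funext j
      by_cases hj : j = i
      · subst hj
        simp [hemb]
      · simp [hemb, Function.update_of_ne hj, Pi.single_eq_of_ne hj]
    · rw [dif_neg h]
      have hki : (k i : ℕ) + 1 = l := by
        have := (k i).2
        omega
      have heq : emb k + Pi.single i 1 = emb (Function.update k i ⟨0, hl⟩) + Pi.single i l := by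
        funext j
        by_cases hj : j = i
        · subst hj
          simp [hemb, hki]
        · simp [hemb, Function.update_of_ne hj, Pi.single_eq_of_ne hj]
      rw [heq, hwl]
  have hscalar_inv : ∀ (S T : Module.End K V) (c : K) (u : V), S * T = 1 → c ≠ 0 →
      T u = c • u → S u = c⁻¹ • u := by
    intro S T c u hST hc hTu
    have h4 : S (T u) = u := by rw [← Module.End.mul_apply, hST, Module.End.one_apply]
    rw [hTu, map_smul] at h4
    calc S u = c⁻¹ • (c • S u) := by rw [smul_smul, inv_mul_cancel₀ hc, one_smul]
    _ = c⁻¹ • u := by rw [h4]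
  have hAinv : ∀ (i : Fin r) (k : Fin r → ℕ),
      ρ (((a i)⁻¹ : Bˣ) : B) (w k) = (eps ^ (d i * k i) * ν i)⁻¹ • w k := by
    intro i k
    exact hscalar_inv _ _ _ _ (hunit (a i)).1
      (mul_ne_zero (pow_ne_zero _ hepsne) (hνne i)) (hAw i k)
  have hZw : ∀ (j : Fin t) (u : V), ρ ((z j : Bˣ) : B) u = α j • u := by
    intro j u
    rw [hα j, LinearMap.smul_apply, Module.End.one_apply]
  have hZinv : ∀ (j : Fin t) (u : V), ρ (((z j)⁻¹ : Bˣ) : B) u = (α j)⁻¹ • u := by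
    intro j u
    exact hscalar_inv _ _ _ _ (hunit (z j)).1 (hαne j) (hZw j u)
  have hBinvfor : ∀ (k : Fin r → Fin l) (i : Fin r),
      ρ (((b i)⁻¹ : Bˣ) : B) (w (emb k)) ∈ W := by
    intro k i
    by_cases h0 : 0 < (k i : ℕ)
    · have hlt : (k i : ℕ) - 1 < l := by
        have := (k i).2
        omega
      have heq : emb (Function.update k i ⟨(k i : ℕ) - 1, hlt⟩) + Pi.single i 1 = emb k := by
        funext j
        by_cases hj : j = i
        · subst hj
          simp [hemb]
          omega
        · simp [hemb, Function.update_of_ne hj, Pi.single_eq_of_ne hj]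
      have hS : ρ (((b i)⁻¹ : Bˣ) : B) (w (emb k)) =
          w (emb (Function.update k i ⟨(k i : ℕ) - 1, hlt⟩)) := by
        rw [← heq, ← hBw, ← Module.End.mul_apply, (hunit (b i)).1, Module.End.one_apply]
      rw [hS]
      exact hmemW _
    · have hlt : l - 1 < l := by omega
      have heq : emb (Function.update k i ⟨l - 1, hlt⟩) + Pi.single i 1
          = emb k + Pi.single i l := by
        funext j
        by_cases hj : j = i
        · subst hj
          simp [hemb]
          omega
        · simp [hemb, Function.update_of_ne hj, Pi.single_eq_of_ne hj]
      have hbw : Bo i (w (emb (Function.update k i ⟨l - 1, hlt⟩))) = β i • w (emb k) := by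
        rw [hBw, heq, hwl]
      have hS : ρ (((b i)⁻¹ : Bˣ) : B) (w (emb k)) =
          (β i)⁻¹ • w (emb (Function.update k i ⟨l - 1, hlt⟩)) := by
        have h4 : ρ (((b i)⁻¹ : Bˣ) : B) (Bo i (w (emb (Function.update k i ⟨l - 1, hlt⟩))))
            = w (emb (Function.update k i ⟨l - 1, hlt⟩)) := by
          rw [← Module.End.mul_apply, (hunit (b i)).1, Module.End.one_apply]
        rw [hbw, map_smul] at h4
        calc ρ (((b i)⁻¹ : Bˣ) : B) (w (emb k))
            = (β i)⁻¹ • (β i • ρ (((b i)⁻¹ : Bˣ) : B) (w (emb k))) := by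
              rw [smul_smul, inv_mul_cancel₀ (hβne i), one_smul]
        _ = (β i)⁻¹ • w (emb (Function.update k i ⟨l - 1, hlt⟩)) := by rw [h4]
      rw [hS]
      exact W.smul_mem _ (hmemW _)
  -- invariance of W
  have hWinv : ∀ x : B, ∀ v ∈ W, ρ x v ∈ W := by
    have hmemgen : ∀ g : B, (∀ k : Fin r → Fin l, ρ g (w (emb k)) ∈ W) →
        g ∈ Subalgebra.comap ρ (stabAlg W) := by
      intro g hg
      rw [Subalgebra.mem_comap]
      show ∀ v ∈ W, ρ g v ∈ W
      intro v hv
      have hle : W ≤ W.comap (ρ g) := by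
        rw [hWdef]
        apply Submodule.span_le.mpr
        rintro x ⟨k, rfl⟩
        exact hg k
      exact hle hv
    have hadj : Algebra.adjoin K
        (Set.range (fun i => ((a i : Bˣ) : B)) ∪ Set.range (fun i => (((a i)⁻¹ : Bˣ) : B)) ∪
         Set.range (fun i => ((b i : Bˣ) : B)) ∪ Set.range (fun i => (((b i)⁻¹ : Bˣ) : B)) ∪
         Set.range (fun j => ((z j : Bˣ) : B)) ∪ Set.range (fun j => (((z j)⁻¹ : Bˣ) : B)))
        ≤ Subalgebra.comap ρ (stabAlg W) := by
      apply Algebra.adjoin_le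
      refine Set.union_subset (Set.union_subset (Set.union_subset (Set.union_subset
        (Set.union_subset ?_ ?_) ?_) ?_) ?_) ?_
      · rintro x ⟨i, rfl⟩
        apply hmemgen
        intro k
        rw [show ρ ((a i : Bˣ) : B) = A i from rfl, hAw]
        exact W.smul_mem _ (hmemW k)
      · rintro x ⟨i, rfl⟩
        apply hmemgen
        intro k
        rw [hAinv]
        exact W.smul_mem _ (hmemW k)
      · rintro x ⟨i, rfl⟩
        apply hmemgen
        intro k
        rw [show ρ ((b i : Bˣ) : B) = Bo i from rfl, hBfor]
        by_cases h : (k i : ℕ) + 1 < l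
        · rw [dif_pos h]
          exact hmemW _
        · rw [dif_neg h]
          exact W.smul_mem _ (hmemW _)
      · rintro x ⟨i, rfl⟩
        exact hmemgen _ (fun k => hBinvfor k i)
      · rintro x ⟨j, rfl⟩
        apply hmemgen
        intro k
        rw [hZw]
        exact W.smul_mem _ (hmemW k)
      · rintro x ⟨j, rfl⟩
        apply hmemgen
        intro k
        rw [hZinv]
        exact W.smul_mem _ (hmemW k)
    intro x v hv
    have hx : x ∈ Subalgebra.comap ρ (stabAlg W) := by
      have : x ∈ Algebra.adjoin K
        (Set.range (fun i => ((a i : Bˣ) : B)) ∪ Set.range (fun i => (((a i)⁻¹ : Bˣ) : B)) ∪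
         Set.range (fun i => ((b i : Bˣ) : B)) ∪ Set.range (fun i => (((b i)⁻¹ : Bˣ) : B)) ∪
         Set.range (fun j => ((z j : Bˣ) : B)) ∪ Set.range (fun j => (((z j)⁻¹ : Bˣ) : B))) := by
        rw [hgen]
        exact Algebra.mem_top
      exact hadj this
    exact hx v hv
  have hWtop : W = ⊤ := by
    rcases hirr W hWinv with hbot | htop
    · exfalso
      have hm := hmemW (fun _ => ⟨0, hl⟩)
      rw [hbot, Submodule.mem_bot] at hm
      exact hwne _ hm
    · exact htop
  -- linear independence
  have hli : LinearIndependent K (fun k : Fin r → Fin l => w (emb k)) := by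
    rw [Fintype.linearIndependent_iff]
    intro g hsum s
    have hApow : ∀ (i : Fin r) (k : Fin r → ℕ) (m : ℕ),
        ((A i) ^ m) (w k) = ((eps ^ (d i * k i) * ν i) ^ m) • w k := by
      intro i k m
      induction m with
      | zero => simp
      | succ m ih =>
        rw [pow_succ', Module.End.mul_apply, ih, map_smul, hAw, smul_smul, ← pow_succ]
    set T : Module.End K V := (List.ofFn fun i : Fin r =>
      ∑ m ∈ Finset.range l,
        (((eps ^ (d i * (s i : ℕ)) * ν i))⁻¹ ^ m) • ((A i) ^ m)).prod with hT
    have hTw : ∀ k : Fin r → Fin l, T (w (emb k)) =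
        (∏ i, if k i = s i then (l : K) else 0) • w (emb k) := by
      intro k
      rw [hT]
      apply ofFn_prod_apply_eigen
      intro i
      rw [LinearMap.sum_apply]
      have hterm : ∀ m ∈ Finset.range l,
          ((((eps ^ (d i * (s i : ℕ)) * ν i))⁻¹ ^ m) • ((A i) ^ m)) (w (emb k)) =
          ((((eps ^ (d i * (s i : ℕ)) * ν i))⁻¹ * (eps ^ (d i * (k i : ℕ)) * ν i)) ^ m)
            • w (emb k) := by
        intro m _
        rw [LinearMap.smul_apply, hApow, smul_smul]
        simp only [hemb]
        congr 1
        ring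
      rw [Finset.sum_congr rfl hterm, ← Finset.sum_smul]
      congr 1
      set ξ : K := ((eps ^ (d i * (s i : ℕ)) * ν i))⁻¹ * (eps ^ (d i * (k i : ℕ)) * ν i) with hξ
      by_cases hks : k i = s i
      · rw [if_pos hks]
        have hone : ξ = 1 := by
          rw [hξ, hks, inv_mul_cancel₀ (mul_ne_zero (pow_ne_zero _ hepsne) (hνne i))]
        rw [hone]
        simp
      · rw [if_neg hks]
        have hμs : eps ^ (d i * (s i : ℕ)) * ν i ≠ 0 :=
          mul_ne_zero (pow_ne_zero _ hepsne) (hνne i)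
        have he : ∀ m : ℕ, (eps ^ (d i * m)) ^ l = 1 := by
          intro m
          rw [← pow_mul, mul_comm, pow_mul, hprim.pow_eq_one, one_pow]
        have hξl : ξ ^ l = 1 := by
          rw [hξ, mul_pow, inv_pow, mul_pow, he, one_mul, mul_pow, he, one_mul,
            inv_mul_cancel₀ (pow_ne_zero _ (hνne i))]
        have hξ1 : ξ ≠ 1 := by
          intro hcon
          rw [hξ] at hcon
          have hmul : eps ^ (d i * (s i : ℕ)) * ν i = eps ^ (d i * (k i : ℕ)) * ν i :=
            (inv_mul_eq_one₀ hμs).mp hcon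
          have h2 := mul_right_cancel₀ (hνne i) hmul
          have h3 : (s i : ℕ) = (k i : ℕ) :=
            eps_pow_inj hl hprim (hd i) (s i).2 (k i).2 h2
          exact hks (Fin.val_injective h3.symm)
        have hgeo := geom_sum_mul ξ l
        rw [hξl, sub_self] at hgeo
        rcases mul_eq_zero.mp hgeo with hz | hz
        · exact hz
        · exact absurd (sub_eq_zero.mp hz) hξ1
    have h0 : T (∑ k, g k • w (emb k)) = 0 := by rw [hsum, map_zero]
    rw [map_sum] at h0
    have hrw : ∀ k : Fin r → Fin l, T (g k • w (emb k)) =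
        (g k * (∏ i, if k i = s i then (l : K) else 0)) • w (emb k) := by
      intro k
      rw [map_smul, hTw, smul_smul]
    rw [Finset.sum_congr rfl (fun k _ => hrw k)] at h0
    have hsingle : ∑ k : Fin r → Fin l,
        (g k * (∏ i, if k i = s i then (l : K) else 0)) • w (emb k)
        = (g s * (l : K) ^ r) • w (emb s) := by
      rw [Finset.sum_eq_single s]
      · have hprodl : (∏ i : Fin r, if s i = s i then (l : K) else 0) = (l : K) ^ r := by
          simp
        rw [hprodl]
      · intro k _ hk
        have hex : ∃ i, k i ≠ s i := by
          by_contra hno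
          push_neg at hno
          exact hk (funext hno)
        obtain ⟨i, hi⟩ := hex
        rw [Finset.prod_eq_zero (Finset.mem_univ i)
          (if_neg hi : (if k i = s i then (l : K) else 0) = 0), mul_zero, zero_smul]
      · intro hs
        exact absurd (Finset.mem_univ s) hs
    rw [hsingle] at h0
    haveI : NeZero l := ⟨hl.ne'⟩
    have hlK : ((l : K) ^ r) ≠ 0 := pow_ne_zero _ (hprim.neZero').out
    rcases smul_eq_zero.mp h0 with hc | hw0
    · rcases mul_eq_zero.mp hc with hg | hl0
      · exact hg
      · exact absurd hl0 hlK
    · exact absurd hw0 (hwne _)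
  -- assemble the basis
  have hsp : ⊤ ≤ Submodule.span K (Set.range fun k : Fin r → Fin l => w (emb k)) := by
    rw [← hWdef]
    exact hWtop.ge
  refine ⟨Module.Basis.mk hli hsp, ?_, ?_, ?_⟩
  · intro k i
    rw [Module.Basis.mk_apply]
    have := hAw i (emb k)
    simp only [hemb] at this
    exact this
  · intro k i
    rw [Module.Basis.mk_apply]
    have hthis := hBfor k i
    by_cases h : (k i : ℕ) + 1 < l
    · rw [dif_pos h] at hthis ⊢
      rw [Module.Basis.mk_apply]
      exact hthis
    · rw [dif_neg h] at hthis ⊢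
      rw [Module.Basis.mk_apply]
      exact hthis
  · intro k j
    rw [Module.Basis.mk_apply]
    exact hZw j (w (emb k))

end StdBasis
section MoreAux
variable {K : Type*} [Field K]

lemma smul_cancel_ne {V : Type*} [AddCommGroup V] [Module K V] {c c' : K} {v : V}
    (hv : v ≠ 0) (h : c • v = c' • v) : c = c' := by
  by_contra hne
  have h2 : (c - c') • v = 0 := by rw [sub_smul, h, sub_self]
  rcases smul_eq_zero.mp h2 with h3 | h3
  · exact hne (sub_eq_zero.mp h3)
  · exact hv h3

lemma pow_eig {V : Type*} [AddCommGroup V] [Module K V] {f : Module.End K V} {c : K} {v : V}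
    (h : f v = c • v) : ∀ m : ℕ, (f ^ m) v = c ^ m • v := by
  intro m
  induction m with
  | zero => simp
  | succ m ih =>
    rw [pow_succ', Module.End.mul_apply, ih, map_smul, h, smul_smul, ← pow_succ]

lemma alghom_eq_on_inv {B C : Type*} [Ring B] [Algebra K B] [Ring C] [Algebra K C]
    (φ ψ : B →ₐ[K] C) (u : Bˣ) (h : φ (u : B) = ψ (u : B)) :
    φ ((u⁻¹ : Bˣ) : B) = ψ ((u⁻¹ : Bˣ) : B) := by
  have h1 : φ ((u⁻¹ : Bˣ) : B) * φ (u : B) = 1 := by rw [← map_mul]; simp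
  have h2 : ψ (u : B) * ψ ((u⁻¹ : Bˣ) : B) = 1 := by rw [← map_mul]; simp
  calc φ ((u⁻¹ : Bˣ) : B) = φ ((u⁻¹ : Bˣ) : B) * (ψ (u : B) * ψ ((u⁻¹ : Bˣ) : B)) := by
        rw [h2, mul_one]
  _ = (φ ((u⁻¹ : Bˣ) : B) * φ (u : B)) * ψ ((u⁻¹ : Bˣ) : B) := by rw [h, mul_assoc]
  _ = ψ ((u⁻¹ : Bˣ) : B) := by rw [h1, one_mul]

lemma eig_ne_zero {B : Type*} [Ring B] [Algebra K B] {V : Type*} [AddCommGroup V] [Module K V]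
    (ρ : B →ₐ[K] Module.End K V) (u : Bˣ) {c : K} {v : V} (hv : v ≠ 0)
    (h : ρ (u : B) v = c • v) : c ≠ 0 := by
  intro h0
  apply hv
  have h1 : ρ ((u⁻¹ : Bˣ) : B) (ρ (u : B) v) = v := by
    rw [← Module.End.mul_apply, ← map_mul]
    simp
  rw [h, h0, zero_smul, map_zero] at h1
  exact h1.symm

lemma eps_pow_mod {eps : K} {l : ℕ} (hprim : IsPrimitiveRoot eps l) (x : ℕ) :
    eps ^ x = eps ^ (x % l) := by
  conv_lhs => rw [← Nat.div_add_mod x l]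
  rw [pow_add, pow_mul, hprim.pow_eq_one, one_pow, one_mul]

lemma pow_eval_scalar {B : Type*} [Ring B] [Algebra K B] {V : Type*} [AddCommGroup V]
    [Module K V] (ρ : B →ₐ[K] Module.End K V) (x : B) (n : ℕ) {c γ : K} {u : V}
    (hu : u ≠ 0) (hc : ρ x u = c • u) (hsc : ρ (x ^ n) = γ • 1) : c ^ n = γ := by
  have h1 : ρ (x ^ n) u = c ^ n • u := by
    rw [map_pow]
    exact pow_eig hc n
  rw [hsc, LinearMap.smul_apply, Module.End.one_apply] at h1
  exact (smul_cancel_ne hu h1).symm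

end MoreAux


/-- Over an algebraically closed field `K`, every irreducible finite-dimensional
representation of the twisted Laurent polynomial algebra `B_ε` (relations
`y_{2i-1} y_{2i} = ε^{d_i} y_{2i} y_{2i-1}`, `gcd(d_i,l)=1`, other pairs commuting)
has dimension exactly `l^r`, and is uniquely determined by its central character. -/
theorem irreducible_reps_of_twisted_laurent
    {K B : Type*} [Field K] [IsAlgClosed K] [Ring B] [Algebra K B]
    (l : ℕ) (hl : 0 < l) (eps : K) (hprim : IsPrimitiveRoot eps l)
    (r t : ℕ) (a b : Fin r → Bˣ) (z : Fin t → Bˣ)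
    (d : Fin r → ℕ) (hd : ∀ i, Nat.Coprime (d i) l)
    (hrel : ∀ i, (a i : B) * (b i : B) = eps ^ (d i) • ((b i : B) * (a i : B)))
    (hab : ∀ i j, i ≠ j → Commute (a i : B) (b j : B))
    (haa : ∀ i j, Commute (a i : B) (a j : B))
    (hbb : ∀ i j, Commute (b i : B) (b j : B))
    (hza : ∀ j i, Commute (z j : B) (a i : B))
    (hzb : ∀ j i, Commute (z j : B) (b i : B))
    (hzz : ∀ j j', Commute (z j : B) (z j' : B))
    (hgen : Algebra.adjoin K
      (Set.range (fun i => ((a i : Bˣ) : B)) ∪ Set.range (fun i => (((a i)⁻¹ : Bˣ) : B)) ∪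
       Set.range (fun i => ((b i : Bˣ) : B)) ∪ Set.range (fun i => (((b i)⁻¹ : Bˣ) : B)) ∪
       Set.range (fun j => ((z j : Bˣ) : B)) ∪ Set.range (fun j => (((z j)⁻¹ : Bˣ) : B)))
      = ⊤)
    (hbasis : LinearIndependent K
      (fun m : (Fin r → ℤ) × (Fin r → ℤ) × (Fin t → ℤ) =>
        (List.ofFn fun i => ((a i ^ m.1 i : Bˣ) : B)).prod *
        (List.ofFn fun i => ((b i ^ m.2.1 i : Bˣ) : B)).prod *
        (List.ofFn fun j => ((z j ^ m.2.2 j : Bˣ) : B)).prod))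
    {V₁ V₂ : Type*} [AddCommGroup V₁] [Module K V₁] [FiniteDimensional K V₁]
    [Nontrivial V₁] [AddCommGroup V₂] [Module K V₂] [FiniteDimensional K V₂]
    [Nontrivial V₂]
    (ρ₁ : B →ₐ[K] Module.End K V₁) (ρ₂ : B →ₐ[K] Module.End K V₂)
    (hirr₁ : ∀ W : Submodule K V₁, (∀ x : B, ∀ v ∈ W, ρ₁ x v ∈ W) → W = ⊥ ∨ W = ⊤)
    (hirr₂ : ∀ W : Submodule K V₂, (∀ x : B, ∀ v ∈ W, ρ₂ x v ∈ W) → W = ⊥ ∨ W = ⊤) :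
    Module.finrank K V₁ = l ^ r ∧
    ((∀ x : B, x ∈ Subalgebra.center K B → ∀ c : K,
        (ρ₁ x = c • (1 : Module.End K V₁) ↔ ρ₂ x = c • (1 : Module.End K V₂))) →
      ∃ e : V₁ ≃ₗ[K] V₂, ∀ (x : B) (v : V₁), e (ρ₁ x v) = ρ₂ x (e v)) := by
  classical
  haveI : NeZero l := ⟨hl.ne'⟩
  have hepsl : ∀ D : ℕ, (eps ^ D) ^ l = 1 := by
    intro D
    rw [← pow_mul, mul_comm, pow_mul, hprim.pow_eq_one, one_pow]
  -- central elements
  have hcentral : ∀ x₀ : B, (∀ i, Commute x₀ ((a i : Bˣ) : B)) →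
      (∀ i, Commute x₀ ((b i : Bˣ) : B)) → (∀ j, Commute x₀ ((z j : Bˣ) : B)) →
      x₀ ∈ Subalgebra.center K B := by
    intro x₀ hxa hxb hxz
    rw [Subalgebra.mem_center_iff]
    intro y
    have hsub : Algebra.adjoin K
        (Set.range (fun i => ((a i : Bˣ) : B)) ∪ Set.range (fun i => (((a i)⁻¹ : Bˣ) : B)) ∪
         Set.range (fun i => ((b i : Bˣ) : B)) ∪ Set.range (fun i => (((b i)⁻¹ : Bˣ) : B)) ∪
         Set.range (fun j => ((z j : Bˣ) : B)) ∪ Set.range (fun j => (((z j)⁻¹ : Bˣ) : B)))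
        ≤ Subalgebra.centralizer K {x₀} := by
      apply Algebra.adjoin_le
      refine Set.union_subset (Set.union_subset (Set.union_subset (Set.union_subset
        (Set.union_subset ?_ ?_) ?_) ?_) ?_) ?_ <;> rintro g ⟨i, rfl⟩ <;>
        rw [SetLike.mem_coe, Subalgebra.mem_centralizer_iff] <;> rintro g' rfl
      · exact (hxa i).eq
      · exact ((hxa i).units_inv_right).eq
      · exact (hxb i).eq
      · exact ((hxb i).units_inv_right).eq
      · exact (hxz i).eq
      · exact ((hxz i).units_inv_right).eq
    have hy : y ∈ Subalgebra.centralizer K {x₀} := by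
      apply hsub
      rw [hgen]
      exact Algebra.mem_top
    have := (Subalgebra.mem_centralizer_iff (R := K)).mp hy x₀ rfl
    exact this.symm
  have hcenter_z : ∀ j, ((z j : Bˣ) : B) ∈ Subalgebra.center K B := by
    intro j
    exact hcentral _ (fun i => hza j i) (fun i => hzb j i) (fun j' => hzz j j')
  have hcomm_albi : ∀ i, Commute (((a i : Bˣ) : B) ^ l) ((b i : Bˣ) : B) := by
    intro i
    have := pow_swap' (hrel i) l
    rw [hepsl, one_smul] at this
    exact this
  have hcomm_aibl : ∀ i, Commute ((a i : Bˣ) : B) (((b i : Bˣ) : B) ^ l) := by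
    intro i
    have := pow_swap (hrel i) l
    rw [hepsl, one_smul] at this
    exact this
  have hcenter_al : ∀ i, ((a i : Bˣ) : B) ^ l ∈ Subalgebra.center K B := by
    intro i
    apply hcentral
    · intro i'
      exact (haa i i').pow_left l
    · intro i'
      by_cases hii : i = i'
      · subst hii
        exact hcomm_albi i
      · exact (hab i i' hii).pow_left l
    · intro j
      exact ((hza j i).symm.pow_left l)
  have hcenter_bl : ∀ i, ((b i : Bˣ) : B) ^ l ∈ Subalgebra.center K B := by
    intro i
    apply hcentral
    · intro i'
      by_cases hii : i' = i
      · subst hii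
        exact (hcomm_aibl i').symm
      · exact ((hab i' i hii).symm.pow_left l)
    · intro i'
      exact (hbb i i').pow_left l
    · intro j
      exact ((hzb j i).symm.pow_left l)
  have hc_comm : ∀ x₀ : B, x₀ ∈ Subalgebra.center K B → ∀ y : B, x₀ * y = y * x₀ := by
    intro x₀ hx₀ y
    exact (Subalgebra.mem_center_iff.mp hx₀ y).symm
  -- Schur scalars for ρ₁
  choose β₁ hβ₁ using fun i : Fin r =>
    schur_scalar ρ₁ hirr₁ (((b i : Bˣ) : B) ^ l) (hc_comm _ (hcenter_bl i))
  choose α₁ hα₁ using fun j : Fin t =>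
    schur_scalar ρ₁ hirr₁ ((z j : Bˣ) : B) (hc_comm _ (hcenter_z j))
  -- common eigenvector for ρ₁
  obtain ⟨v₁, lam₁, hv₁, heig₁⟩ := exists_common_eigenvector r V₁
    (fun i => ρ₁ ((a i : Bˣ) : B)) (fun i j => Commute.map (haa i j) ρ₁)
  obtain ⟨bas₁, f1a, f1b, f1z⟩ := std_basis l hl eps hprim r t a b z d hd hrel hab hbb hgen
    ρ₁ hirr₁ lam₁ β₁ α₁ v₁ hv₁ heig₁ hβ₁ hα₁
  constructor
  · rw [Module.finrank_eq_card_basis bas₁]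
    simp [Fintype.card_fun]
  · intro hmatch
    -- Schur scalars for ρ₂
    choose γ₂ hγ₂ using fun i : Fin r =>
      schur_scalar ρ₂ hirr₂ (((a i : Bˣ) : B) ^ l) (hc_comm _ (hcenter_al i))
    choose β₂ hβ₂ using fun i : Fin r =>
      schur_scalar ρ₂ hirr₂ (((b i : Bˣ) : B) ^ l) (hc_comm _ (hcenter_bl i))
    choose α₂ hα₂ using fun j : Fin t =>
      schur_scalar ρ₂ hirr₂ ((z j : Bˣ) : B) (hc_comm _ (hcenter_z j))
    -- transfer to ρ₁
    have hγ₁' : ∀ i, ρ₁ (((a i : Bˣ) : B) ^ l) = γ₂ i • 1 :=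
      fun i => (hmatch _ (hcenter_al i) (γ₂ i)).mpr (hγ₂ i)
    have hβ₁' : ∀ i, ρ₁ (((b i : Bˣ) : B) ^ l) = β₂ i • 1 :=
      fun i => (hmatch _ (hcenter_bl i) (β₂ i)).mpr (hβ₂ i)
    have hα₁' : ∀ j, ρ₁ ((z j : Bˣ) : B) = α₂ j • 1 :=
      fun j => (hmatch _ (hcenter_z j) (α₂ j)).mpr (hα₂ j)
    -- common eigenvector for ρ₂
    obtain ⟨v₂, lam₂, hv₂, heig₂⟩ := exists_common_eigenvector r V₂
      (fun i => ρ₂ ((a i : Bˣ) : B)) (fun i j => Commute.map (haa i j) ρ₂)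
    -- eigenvalue l-th powers
    have hlam₁l : ∀ i, lam₁ i ^ l = γ₂ i :=
      fun i => pow_eval_scalar ρ₁ _ l hv₁ (heig₁ i) (hγ₁' i)
    have hlam₂l : ∀ i, lam₂ i ^ l = γ₂ i :=
      fun i => pow_eval_scalar ρ₂ _ l hv₂ (heig₂ i) (hγ₂ i)
    have hlam₁ne : ∀ i, lam₁ i ≠ 0 := fun i => eig_ne_zero ρ₁ (a i) hv₁ (heig₁ i)
    -- find the exponent shift k₀
    have hk₀ : ∀ i : Fin r, ∃ k : ℕ, k < l ∧ eps ^ (d i * k) = (lam₁ i)⁻¹ * lam₂ i := by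
      intro i
      have hξl : ((lam₁ i)⁻¹ * lam₂ i) ^ l = 1 := by
        rw [mul_pow, inv_pow, hlam₁l, hlam₂l,
          inv_mul_cancel₀ (by rw [← hlam₁l i]; exact pow_ne_zero _ (hlam₁ne i))]
      obtain ⟨m, hm, hem⟩ := hprim.eq_pow_of_pow_eq_one hξl
      set u : (ZMod l)ˣ := ZMod.unitOfCoprime (d i) (hd i) with hu
      set x : ZMod l := ((u⁻¹ : (ZMod l)ˣ) : ZMod l) * (m : ZMod l) with hx
      refine ⟨x.val, ZMod.val_lt _, ?_⟩
      have hcast : ((d i * x.val : ℕ) : ZMod l) = (m : ZMod l) := by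
        push_cast
        rw [ZMod.natCast_val, ZMod.cast_id]
        rw [hx, ← mul_assoc]
        have hdu : ((d i : ℕ) : ZMod l) = (u : ZMod l) := (ZMod.coe_unitOfCoprime _ _).symm
        rw [hdu, ← Units.val_mul, mul_inv_cancel, Units.val_one, one_mul]
      have hmod : (d i * x.val) % l = m % l := (ZMod.natCast_eq_natCast_iff _ _ _).mp hcast
      rw [eps_pow_mod hprim, hmod, ← eps_pow_mod hprim, hem]
    choose k₀ hk₀lt hk₀eq using hk₀
    -- rebuild a basis for ρ₁ adapted to the eigenvalues of ρ₂
    obtain ⟨bas₁', g1a, g1b, g1z⟩ := std_basis l hl eps hprim r t a b z d hd hrel hab hbb hgen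
      ρ₁ hirr₁ lam₁ β₂ α₂ v₁ hv₁ heig₁ hβ₁' hα₁'
    set k₀' : Fin r → Fin l := fun i => ⟨k₀ i, hk₀lt i⟩ with hk₀'
    have hv₁' : bas₁' k₀' ≠ 0 := bas₁'.ne_zero k₀'
    have heig₁' : ∀ i, ρ₁ ((a i : Bˣ) : B) (bas₁' k₀') = lam₂ i • bas₁' k₀' := by
      intro i
      rw [g1a]
      congr 1
      show eps ^ (d i * k₀ i) * lam₁ i = lam₂ i
      rw [hk₀eq i, mul_comm (lam₁ i)⁻¹ (lam₂ i), mul_assoc,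
        inv_mul_cancel₀ (hlam₁ne i), mul_one]
    obtain ⟨basF, h1a, h1b, h1z⟩ := std_basis l hl eps hprim r t a b z d hd hrel hab hbb hgen
      ρ₁ hirr₁ lam₂ β₂ α₂ (bas₁' k₀') hv₁' heig₁' hβ₁' hα₁'
    obtain ⟨bas₂, h2a, h2b, h2z⟩ := std_basis l hl eps hprim r t a b z d hd hrel hab hbb hgen
      ρ₂ hirr₂ lam₂ β₂ α₂ v₂ hv₂ heig₂ hβ₂ hα₂
    -- the equivalence
    set e : V₁ ≃ₗ[K] V₂ := basF.equiv bas₂ (Equiv.refl _) with he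
    have hbe : ∀ k : Fin r → Fin l, e (basF k) = bas₂ k := by
      intro k
      rw [he, Module.Basis.equiv_apply, Equiv.refl_apply]
    have hbe' : ∀ k : Fin r → Fin l, e.symm (bas₂ k) = basF k := by
      intro k
      rw [← hbe k, LinearEquiv.symm_apply_apply]
    set σ : B →ₐ[K] Module.End K V₁ :=
      { toFun := fun x => e.symm.toLinearMap ∘ₗ (ρ₂ x) ∘ₗ e.toLinearMap
        map_one' := by
          apply LinearMap.ext
          intro v
          simp
        map_mul' := by
          intro x y
          apply LinearMap.ext
          intro v
          simp
        map_zero' := by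
          apply LinearMap.ext
          intro v
          simp
        map_add' := by
          intro x y
          apply LinearMap.ext
          intro v
          simp
        commutes' := by
          intro c
          apply LinearMap.ext
          intro v
          simp [Module.algebraMap_end_apply] } with hσ
    have hσ_apply : ∀ (x : B) (v : V₁), σ x v = e.symm (ρ₂ x (e v)) := by
      intro x v
      rfl
    have hgen_eq : ∀ g : B, (∀ k : Fin r → Fin l, ρ₁ g (basF k) = e.symm (ρ₂ g (bas₂ k))) →
        ρ₁ g = σ g := by
      intro g hg
      apply basF.ext
      intro k
      rw [hσ_apply, hbe k]
      exact hg k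
    have heq_a : ∀ i, ρ₁ ((a i : Bˣ) : B) = σ ((a i : Bˣ) : B) := by
      intro i
      apply hgen_eq
      intro k
      rw [h1a, h2a, map_smul, hbe']
    have heq_b : ∀ i, ρ₁ ((b i : Bˣ) : B) = σ ((b i : Bˣ) : B) := by
      intro i
      apply hgen_eq
      intro k
      rw [h1b, h2b]
      by_cases h : (k i : ℕ) + 1 < l
      · rw [dif_pos h, dif_pos h, hbe']
      · rw [dif_neg h, dif_neg h, map_smul, hbe']
    have heq_z : ∀ j, ρ₁ ((z j : Bˣ) : B) = σ ((z j : Bˣ) : B) := by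
      intro j
      apply hgen_eq
      intro k
      rw [h1z, h2z, map_smul, hbe']
    have hadj : Algebra.adjoin K
        (Set.range (fun i => ((a i : Bˣ) : B)) ∪ Set.range (fun i => (((a i)⁻¹ : Bˣ) : B)) ∪
         Set.range (fun i => ((b i : Bˣ) : B)) ∪ Set.range (fun i => (((b i)⁻¹ : Bˣ) : B)) ∪
         Set.range (fun j => ((z j : Bˣ) : B)) ∪ Set.range (fun j => (((z j)⁻¹ : Bˣ) : B)))
        ≤ AlgHom.equalizer ρ₁ σ := by
      apply Algebra.adjoin_le
      refine Set.union_subset (Set.union_subset (Set.union_subset (Set.union_subset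
        (Set.union_subset ?_ ?_) ?_) ?_) ?_) ?_ <;> rintro g ⟨i, rfl⟩
      · exact heq_a i
      · exact alghom_eq_on_inv ρ₁ σ (a i) (heq_a i)
      · exact heq_b i
      · exact alghom_eq_on_inv ρ₁ σ (b i) (heq_b i)
      · exact heq_z i
      · exact alghom_eq_on_inv ρ₁ σ (z i) (heq_z i)
    have hρσ : ∀ x : B, ρ₁ x = σ x := by
      intro x
      have hx : x ∈ AlgHom.equalizer ρ₁ σ := by
        apply hadj
        rw [hgen]
        exact Algebra.mem_top
      exact hx
    refine ⟨e, ?_⟩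
    intro x v
    rw [hρσ x, hσ_apply, LinearEquiv.apply_symm_apply]
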